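/- The matrix B(p) defined above is positive definite (as a self-adjoint operator on ℂ⁴) for every p on the forward light cone with r = |𝐩| > 0. -/

import Mathlib

set_option maxHeartbeats 2000000


open scoped ComplexOrder

noncomputable section

/-- `r = |𝐩|` for `p = (p⁰, p¹, p², p³)`. -/
def rr (p : Fin 4 → ℝ) : ℝ := Real.sqrt ((p 1) ^ 2 + (p 2) ^ 2 + (p 3) ^ 2)

/-- The off-diagonal coefficient `(r⁻² - r²)/(2r)`. -/
def bcoef (p : Fin 4 → ℝ) : ℝ := ((rr p)⁻¹ ^ 2 - (rr p) ^ 2) / (2 * rr p)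

/-- The spatial coefficient `(r⁻² + r² - 2)/(2r²)`. -/
def ccoef (p : Fin 4 → ℝ) : ℝ := ((rr p)⁻¹ ^ 2 + (rr p) ^ 2 - 2) / (2 * (rr p) ^ 2)

/-- The real symmetric matrix `B(p)`. -/
def Bmat (p : Fin 4 → ℝ) : Matrix (Fin 4) (Fin 4) ℝ :=
  !![((rr p)⁻¹ ^ 2 + (rr p) ^ 2) / 2, bcoef p * p 1, bcoef p * p 2, bcoef p * p 3;
     bcoef p * p 1, ccoef p * p 1 * p 1 + 1, ccoef p * p 1 * p 2, ccoef p * p 1 * p 3;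
     bcoef p * p 2, ccoef p * p 2 * p 1, ccoef p * p 2 * p 2 + 1, ccoef p * p 2 * p 3;
     bcoef p * p 3, ccoef p * p 3 * p 1, ccoef p * p 3 * p 2, ccoef p * p 3 * p 3 + 1]

/-- `B(p)` is positive definite as a self-adjoint operator on `ℂ⁴`, for every `p`
on the forward light cone with `r = |𝐩| > 0`. -/
theorem B_posDef (p : Fin 4 → ℝ) (hcone : p 0 = rr p) (hr : 0 < rr p) :
    ((Bmat p).map (fun x => (x : ℂ))).PosDef := by
  have hr0 : rr p ≠ 0 := ne_of_gt hr
  have hR0 : ((rr p : ℝ) : ℂ) ≠ 0 := by exact_mod_cast hr0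
  have hsq : rr p ^ 2 = p 1 ^ 2 + p 2 ^ 2 + p 3 ^ 2 := Real.sq_sqrt (by positivity)
  rw [Matrix.posDef_iff_dotProduct_mulVec]
  constructor
  · ext i j
    fin_cases i <;> fin_cases j <;>
      simp [Bmat, Matrix.conjTranspose_apply, Matrix.map_apply, Complex.conj_ofReal] <;>
      push_cast <;> ring
  · intro x hx
    set r := rr p with hrdef
    set s : ℂ := (p 1 : ℂ) * x 1 + (p 2 : ℂ) * x 2 + (p 3 : ℂ) * x 3 with hs
    set c1 : ℂ := x 0 + (r : ℂ)⁻¹ * s with hc1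
    set c2 : ℂ := x 0 - (r : ℂ)⁻¹ * s with hc2
    set T : ℝ := Complex.normSq (x 1) + Complex.normSq (x 2) + Complex.normSq (x 3) with hT
    set Q : ℝ := r⁻¹ ^ 2 / 2 * Complex.normSq c1 + r ^ 2 / 2 * Complex.normSq c2 +
      (T - r⁻¹ ^ 2 * Complex.normSq s) with hQ
    have key : dotProduct (star x) (((Bmat p).map (fun x => (x : ℂ))).mulVec x) = (Q : ℂ) := by
      rw [hQ, hT]
      push_cast
      simp only [← Complex.mul_conj]
      simp only [Bmat, bcoef, ccoef, Matrix.mulVec, dotProduct, Fin.sum_univ_four,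
        Matrix.map_apply, Matrix.of_apply, Matrix.cons_val', Matrix.cons_val_zero, Matrix.cons_val_one,
        Matrix.head_cons, Matrix.empty_val', Matrix.cons_val_fin_one, Matrix.head_fin_const,
        Matrix.cons_val_two, Matrix.cons_val_three, Matrix.tail_cons, Pi.star_apply,
        Complex.star_def, hc1, hc2, hs, map_add, map_sub, map_mul, map_inv₀,
        Complex.conj_ofReal, ← hrdef]
      push_cast
      field_simp
      ring
    rw [key, Complex.zero_lt_real]
    have hN1 : 0 ≤ Complex.normSq c1 := Complex.normSq_nonneg _
    have hN2 : 0 ≤ Complex.normSq c2 := Complex.normSq_nonneg _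
    have hCS : Complex.normSq s ≤ r ^ 2 * T := by
      rw [hT, hrdef, hsq]
      simp only [hs, Complex.normSq_apply, Complex.add_re, Complex.add_im, Complex.mul_re,
        Complex.mul_im, Complex.ofReal_re, Complex.ofReal_im]
      nlinarith [sq_nonneg (p 1 * (x 2).re - p 2 * (x 1).re),
        sq_nonneg (p 1 * (x 3).re - p 3 * (x 1).re),
        sq_nonneg (p 2 * (x 3).re - p 3 * (x 2).re),
        sq_nonneg (p 1 * (x 2).im - p 2 * (x 1).im),
        sq_nonneg (p 1 * (x 3).im - p 3 * (x 1).im),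
        sq_nonneg (p 2 * (x 3).im - p 3 * (x 2).im)]
    have h3 : r⁻¹ ^ 2 * Complex.normSq s ≤ T := by
      calc r⁻¹ ^ 2 * Complex.normSq s ≤ r⁻¹ ^ 2 * (r ^ 2 * T) := by
            exact mul_le_mul_of_nonneg_left hCS (by positivity)
        _ = T := by field_simp
    have hA : (0 : ℝ) < r⁻¹ ^ 2 / 2 := by positivity
    have hB : (0 : ℝ) < r ^ 2 / 2 := by positivity
    rcases Classical.em (x 0 = 0 ∧ s = 0) with ⟨h0, hs0⟩ | h
    · -- then some spatial component is nonzero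
      have hex : x 1 ≠ 0 ∨ x 2 ≠ 0 ∨ x 3 ≠ 0 := by
        by_contra hcon
        push_neg at hcon
        obtain ⟨h1, h2, h3'⟩ := hcon
        apply hx
        funext i
        fin_cases i
        · exact h0
        · exact h1
        · exact h2
        · exact h3'
      have hn1 := Complex.normSq_nonneg (x 1)
      have hn2 := Complex.normSq_nonneg (x 2)
      have hn3 := Complex.normSq_nonneg (x 3)
      have hTpos : 0 < T := by
        rw [hT]
        rcases hex with hi | hi | hi
        · have := Complex.normSq_pos.mpr hi
          linarith
        · have := Complex.normSq_pos.mpr hi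
          linarith
        · have := Complex.normSq_pos.mpr hi
          linarith
      have hsz : Complex.normSq s = 0 := by rw [hs0]; simp
      rw [hQ]
      nlinarith [mul_nonneg hA.le hN1, mul_nonneg hB.le hN2]
    · have hc : c1 ≠ 0 ∨ c2 ≠ 0 := by
        by_contra hcc
        push_neg at hcc
        obtain ⟨h1, h2⟩ := hcc
        apply h
        constructor
        · have h2x : (2 : ℂ) * x 0 = 0 := by
            have : c1 + c2 = 2 * x 0 := by rw [hc1, hc2]; ring
            rw [h1, h2] at this; linear_combination -this
          simpa using h2x
        · have h2s : (2 : ℂ) * ((r : ℂ)⁻¹ * s) = 0 := by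
            have : c1 - c2 = 2 * ((r : ℂ)⁻¹ * s) := by rw [hc1, hc2]; ring
            rw [h1, h2] at this; linear_combination -this
          have : (r : ℂ)⁻¹ * s = 0 := by simpa using h2s
          rcases mul_eq_zero.mp this with h' | h'
          · exact absurd h' (inv_ne_zero hR0)
          · exact h'
      rw [hQ]
      rcases hc with hc | hc
      · nlinarith [mul_pos hA (Complex.normSq_pos.mpr hc), mul_nonneg hB.le hN2]
      · nlinarith [mul_pos hB (Complex.normSq_pos.mpr hc), mul_nonneg hA.le hN1]

end
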